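/- For every θ ∈ (0, (√5+1)/2) there exists σ_θ ∈ (0,1) such that for all σ ∈ [σ_θ, 1) the symmetric 2×2 matrix M_θ(σ) with entries M₁₁ = σ(1+θ) − 1, M₁₂ = M₂₁ = (σ+θ−1)(1−θ), M₂₂ = σ − (1−θ)² is positive definite, and moreover max{(1−θ)², 1−θ, 1/(1+θ)} < σ and (σ+θ−1)(4−2√2)/(√2·θ) < σ. -/

import Mathlib

lemma posDef_2x2 (a b d : ℝ) (ha : 0 < a) (hdet : 0 < a * d - b ^ 2) :
    (!![a, b; b, d] : Matrix (Fin 2) (Fin 2) ℝ).PosDef := by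
  constructor
  · ext i j
    fin_cases i <;> fin_cases j <;> rfl
  · intro x hx
    have hx' : x 0 ≠ 0 ∨ x 1 ≠ 0 := by
      by_contra h
      push_neg at h
      apply hx
      ext i
      fin_cases i <;> simp [h.1, h.2]
    simp [Finsupp.sum_fintype, Matrix.mulVec, dotProduct, Fin.sum_univ_two]
    rcases hx' with h | h
    · rcases eq_or_ne (x 1) 0 with h1 | h1
      · have : 0 < x 0 * x 0 := mul_self_pos.mpr h
        rw [h1]
        nlinarith [mul_pos ha this]
      · have : 0 < x 1 * x 1 := mul_self_pos.mpr h1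
        nlinarith [sq_nonneg (a * x 0 + b * x 1)]
    · have : 0 < x 1 * x 1 := mul_self_pos.mpr h
      nlinarith [sq_nonneg (a * x 0 + b * x 1)]

theorem stmt19 (θ : ℝ) (hθ0 : 0 < θ) (hθ1 : θ < (Real.sqrt 5 + 1) / 2) :
    ∃ σθ : ℝ, σθ ∈ Set.Ioo (0 : ℝ) 1 ∧
      ∀ σ ∈ Set.Ico σθ 1,
        (!![σ * (1 + θ) - 1, (σ + θ - 1) * (1 - θ);
            (σ + θ - 1) * (1 - θ), σ - (1 - θ) ^ 2] : Matrix (Fin 2) (Fin 2) ℝ).PosDef ∧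
        max ((1 - θ) ^ 2) (max (1 - θ) (1 / (1 + θ))) < σ ∧
        (σ + θ - 1) * (4 - 2 * Real.sqrt 2) / (Real.sqrt 2 * θ) < σ := by
  have hs5 : Real.sqrt 5 ^ 2 = 5 := Real.sq_sqrt (by norm_num)
  have hs5n : (0:ℝ) ≤ Real.sqrt 5 := Real.sqrt_nonneg 5
  have hs2 : Real.sqrt 2 ^ 2 = 2 := Real.sq_sqrt (by norm_num)
  have hs2n : (0:ℝ) ≤ Real.sqrt 2 := Real.sqrt_nonneg 2
  have h32 : (4:ℝ) < 3 * Real.sqrt 2 := by nlinarith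
  have hθ2 : θ < 2 := by nlinarith
  -- conditions at σ = 1
  have c1 : (0:ℝ) < 1 * (1 + θ) - 1 := by linarith
  have h5ge2 : (2:ℝ) ≤ Real.sqrt 5 := by nlinarith
  have hq : θ ^ 2 < 1 + θ := by
    nlinarith [mul_pos (show 0 < Real.sqrt 5 - (2 * θ - 1) by linarith)
      (show 0 < Real.sqrt 5 + (2 * θ - 1) by linarith)]
  have c2 : (0:ℝ) < (1 * (1 + θ) - 1) * (1 - (1 - θ) ^ 2) - ((1 + θ - 1) * (1 - θ)) ^ 2 := by
    nlinarith [mul_pos (mul_pos hθ0 hθ0) (show 0 < 1 + θ - θ ^ 2 by linarith)]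
  have c3a : (1 - θ) ^ 2 < 1 := by nlinarith
  have c3b : 1 - θ < 1 := by linarith
  have c3c : 1 / (1 + θ) < 1 := by
    rw [div_lt_one (by linarith)]; linarith
  have c4 : (1 + θ - 1) * (4 - 2 * Real.sqrt 2) < 1 * (Real.sqrt 2 * θ) := by
    nlinarith
  -- eventual statement near 1
  have ev : ∀ᶠ σ in nhds (1:ℝ),
      0 < σ * (1 + θ) - 1 ∧
      0 < (σ * (1 + θ) - 1) * (σ - (1 - θ) ^ 2) - ((σ + θ - 1) * (1 - θ)) ^ 2 ∧
      (1 - θ) ^ 2 < σ ∧ 1 - θ < σ ∧ 1 / (1 + θ) < σ ∧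
      (σ + θ - 1) * (4 - 2 * Real.sqrt 2) < σ * (Real.sqrt 2 * θ) := by
    have e1 := (continuousAt_const (y := (0:ℝ))).eventually_lt
      (by fun_prop : ContinuousAt (fun σ : ℝ => σ * (1 + θ) - 1) 1) c1
    have e2 := (continuousAt_const (y := (0:ℝ))).eventually_lt
      (by fun_prop : ContinuousAt
        (fun σ : ℝ => (σ * (1 + θ) - 1) * (σ - (1 - θ) ^ 2) - ((σ + θ - 1) * (1 - θ)) ^ 2) 1) c2
    have e3 := (continuousAt_const (y := ((1 - θ) ^ 2 : ℝ))).eventually_lt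
      (continuousAt_id) c3a
    have e4 := (continuousAt_const (y := (1 - θ : ℝ))).eventually_lt (continuousAt_id) c3b
    have e5 := (continuousAt_const (y := (1 / (1 + θ) : ℝ))).eventually_lt (continuousAt_id) c3c
    have e6 := (by fun_prop : ContinuousAt
        (fun σ : ℝ => (σ + θ - 1) * (4 - 2 * Real.sqrt 2)) 1).eventually_lt
      (by fun_prop : ContinuousAt (fun σ : ℝ => σ * (Real.sqrt 2 * θ)) 1) c4
    filter_upwards [e1, e2, e3, e4, e5, e6] with σ h1 h2 h3 h4 h5 h6
    exact ⟨h1, h2, h3, h4, h5, h6⟩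
  rw [Metric.eventually_nhds_iff] at ev
  obtain ⟨ε, hε, hP⟩ := ev
  refine ⟨max (1 - ε / 2) (1 / 2), ⟨lt_of_lt_of_le (by norm_num) (le_max_right _ _), ?_⟩, ?_⟩
  · exact max_lt (by linarith) (by norm_num)
  · intro σ hσ
    obtain ⟨hσl, hσu⟩ := hσ
    have hσl' : 1 - ε / 2 ≤ σ := le_trans (le_max_left _ _) hσl
    have hd : dist σ 1 < ε := by
      rw [Real.dist_eq, abs_lt]
      constructor <;> linarith
    obtain ⟨h1, h2, h3, h4, h5, h6⟩ := hP hd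
    refine ⟨posDef_2x2 _ _ _ h1 h2, max_lt h3 (max_lt h4 h5), ?_⟩
    rw [div_lt_iff₀ (by positivity)]
    exact h6
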